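/- For a finite directed graph G with set of dilation-deficiency k = |V| − ν (where ν is the maximum matching size of the associated bipartite graph) and p child SCCs, the minimum number of driver nodes N_min needed so that (i) every vertex is reachable from the driver set and (ii) the bipartite graph augmented by input edges to the drivers has a matching saturating V⁻, satisfies max(k, p) ≤ N_min ≤ k + p (with the convention that if k = 0 and p ≥ 1 then N_min = p, and if p = 0 the graph is empty). -/

import Mathlib

/-- The strongly connected component (mutual-reachability class) of a vertex. -/
def sccOf {V : Type*} (E : V → V → Prop) (v : V) : Set V :=
  {u | Relation.ReflTransGen E u v ∧ Relation.ReflTransGen E v u}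

/-- A child SCC: an SCC with no incoming edge from a vertex outside it. -/
def IsChildSCC {V : Type*} (E : V → V → Prop) (S : Set V) : Prop :=
  (∃ v, S = sccOf E v) ∧ ¬ ∃ u v, E u v ∧ v ∈ S ∧ u ∉ S

/-- `M` is a matching of the bipartite graph associated with the digraph `E`. -/
def IsBipMatching {V : Type*} (E : V → V → Prop) (M : Finset (V × V)) : Prop :=
  (∀ p ∈ M, E p.1 p.2) ∧
  (∀ p ∈ M, ∀ q ∈ M, p ≠ q → p.1 ≠ q.1 ∧ p.2 ≠ q.2)

/-- Edges of the bipartite graph augmented by fresh input vertices (`Sum.inr w`)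
attached to the driver nodes `w ∈ W`. -/
def augEdge {V : Type*} (E : V → V → Prop) (W : Finset V) : V ⊕ V → V → Prop :=
  fun a v => match a with
  | Sum.inl u => E u v
  | Sum.inr w => w ∈ W ∧ v = w

/-- `W` is a valid driver set: (i) every vertex is reachable from `W` and
(ii) the augmented bipartite graph has a matching saturating `V⁻`. -/
def Drives {V : Type*} (E : V → V → Prop) (W : Finset V) : Prop :=
  (∀ v : V, ∃ w ∈ W, Relation.ReflTransGen E w v) ∧
  ∃ M : Finset ((V ⊕ V) × V),
    (∀ q ∈ M, augEdge E W q.1 q.2) ∧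
    (∀ q ∈ M, ∀ r ∈ M, q ≠ r → q.1 ≠ r.1 ∧ q.2 ≠ r.2) ∧
    (∀ v : V, ∃ a, (a, v) ∈ M)


open Relation

lemma child_closed {V : Type*} {E : V → V → Prop} {S : Set V}
    (hS : ¬ ∃ u v, E u v ∧ v ∈ S ∧ u ∉ S)
    {u v : V} (hv : v ∈ S) (h : ReflTransGen E u v) : u ∈ S := by
  induction h using ReflTransGen.head_induction_on with
  | refl => exact hv
  | head hab _ ih => by_contra ha; exact hS ⟨_, _, hab, ih, ha⟩

lemma sccOf_eq_of_mem {V : Type*} {E : V → V → Prop} {x v w : V}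
    (hv : x ∈ sccOf E v) (hw : x ∈ sccOf E w) : sccOf E v = sccOf E w := by
  obtain ⟨hxv, hvx⟩ := hv
  obtain ⟨hxw, hwx⟩ := hw
  ext y
  exact ⟨fun ⟨h1, h2⟩ => ⟨(h1.trans hvx).trans hxw, (hwx.trans hxv).trans h2⟩,
         fun ⟨h1, h2⟩ => ⟨(h1.trans hwx).trans hxv, (hvx.trans hxw).trans h2⟩⟩

lemma mem_sccOf_self {V : Type*} (E : V → V → Prop) (v : V) : v ∈ sccOf E v :=
  ⟨ReflTransGen.refl, ReflTransGen.refl⟩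

lemma exists_child {V : Type*} [Finite V] {E : V → V → Prop} (v : V) :
    ∃ u, ReflTransGen E u v ∧ IsChildSCC E (sccOf E u) := by
  classical
  set anc : V → Set V := fun x => {y | ReflTransGen E y x} with hanc
  set T : Set ℕ := {n | ∃ u, ReflTransGen E u v ∧ (anc u).ncard = n} with hT
  have hTne : T.Nonempty := ⟨(anc v).ncard, v, ReflTransGen.refl, rfl⟩
  obtain ⟨u, huv, hcard⟩ := Nat.sInf_mem hTne
  refine ⟨u, huv, ⟨u, rfl⟩, ?_⟩
  rintro ⟨a, b, hab, hbS, haS⟩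
  have hau : ReflTransGen E a u := ReflTransGen.head hab hbS.1
  have hsub : anc a ⊆ anc u := fun y hy => ReflTransGen.trans hy hau
  have hle : (anc u).ncard ≤ (anc a).ncard := by
    rw [hcard]
    exact Nat.sInf_le ⟨a, hau.trans huv, rfl⟩
  have heq : anc a = anc u := Set.eq_of_subset_of_ncard_le hsub hle (Set.toFinite _)
  have hua : ReflTransGen E u a := by
    have : u ∈ anc a := by rw [heq]; exact ReflTransGen.refl
    exact this
  exact haS ⟨hau, hua⟩

lemma lower_p {V : Type*} [Fintype V] {E : V → V → Prop} {W : Finset V}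
    (hW : Drives E W) : {S : Set V | IsChildSCC E S}.ncard ≤ W.card := by
  classical
  set C : Set (Set V) := {S : Set V | IsChildSCC E S} with hC
  rcases C.eq_empty_or_nonempty with h | ⟨S₀, hS₀⟩
  · simp [h]
  obtain ⟨v₀, _⟩ := hS₀.1
  have hex : ∀ S ∈ C, ∃ w, w ∈ W ∧ w ∈ S := by
    rintro S ⟨⟨v, rfl⟩, hno⟩
    obtain ⟨w, hwW, hwv⟩ := hW.1 v
    exact ⟨w, hwW, child_closed hno (mem_sccOf_self E v) hwv⟩
  set f : Set V → V := fun S => if h : ∃ w, w ∈ W ∧ w ∈ S then h.choose else v₀ with hf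
  have hfmem : ∀ S ∈ C, f S ∈ W ∧ f S ∈ S := by
    intro S hS
    have h := hex S hS
    simp only [hf, dif_pos h]
    exact h.choose_spec
  have hinj : Set.InjOn f C := by
    rintro S hS T hT hfeq
    obtain ⟨v, rfl⟩ := hS.1
    obtain ⟨w, rfl⟩ := hT.1
    have h1 := (hfmem _ hS).2
    have h2 := (hfmem _ hT).2
    rw [hfeq] at h1
    exact sccOf_eq_of_mem h1 h2
  calc C.ncard = (f '' C).ncard := (Set.ncard_image_of_injOn hinj).symm
    _ ≤ (↑W : Set V).ncard := Set.ncard_le_ncard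
        (by rintro _ ⟨S, hS, rfl⟩; exact (hfmem S hS).1) (Set.toFinite _)
    _ = W.card := Set.ncard_coe_finset W

lemma lower_k {V : Type*} [Fintype V] {E : V → V → Prop} {W : Finset V} {ν : ℕ}
    (hν : ν ∈ upperBounds {m : ℕ | ∃ M : Finset (V × V), IsBipMatching E M ∧ M.card = m})
    (hW : Drives E W) : Fintype.card V - ν ≤ W.card := by
  classical
  obtain ⟨_, M, hedge, hdis, hsat⟩ := hW
  set M₁ : Finset ((V ⊕ V) × V) := M.filter (fun q => q.1.isLeft) with hM₁
  set M₂ : Finset ((V ⊕ V) × V) := M.filter (fun q => ¬ q.1.isLeft) with hM₂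
  have hsplit : M₁.card + M₂.card = M.card :=
    Finset.card_filter_add_card_filter_not _
  have hVM : Fintype.card V ≤ M.card := by
    have h := Finset.card_le_card_of_injOn (s := Finset.univ) (t := M)
      (fun v => ((hsat v).choose, v))
      (fun v _ => (hsat v).choose_spec) (fun a _ b _ h => congrArg Prod.snd h)
    simpa using h
  have hM₂W : M₂.card ≤ W.card := by
    have hr : ∀ q ∈ M₂, ∃ w, q.1 = Sum.inr w ∧ w ∈ W := by
      intro q hq
      rw [hM₂, Finset.mem_filter] at hq
      obtain ⟨hqM, hql⟩ := hq
      match hq1 : q.1 with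
      | Sum.inl u => rw [hq1] at hql; simp at hql
      | Sum.inr w =>
        have he := hedge q hqM
        rw [hq1] at he
        exact ⟨w, rfl, he.1⟩
    refine Finset.card_le_card_of_injOn (fun q => Sum.elim id id q.1) ?_ ?_
    · intro q hq
      obtain ⟨w, hw, hwW⟩ := hr q hq
      simpa [hw] using hwW
    · intro q hq r hr' heq
      by_contra hne
      obtain ⟨w, hw, -⟩ := hr q hq
      obtain ⟨w', hw', -⟩ := hr r hr'
      have hww : w = w' := by simpa [hw, hw'] using heq
      have h1 := (hdis q (Finset.mem_filter.mp hq).1 r (Finset.mem_filter.mp hr').1 hne).1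
      exact h1 (by rw [hw, hw', hww])
  have hM₁ν : M₁.card ≤ ν := by
    have hl : ∀ q ∈ M₁, ∃ u, q.1 = Sum.inl u := by
      intro q hq
      rw [hM₁, Finset.mem_filter] at hq
      exact Sum.isLeft_iff.mp hq.2
    have hinj : Set.InjOn (fun q : (V ⊕ V) × V => (Sum.elim id id q.1, q.2)) M₁ := by
      intro q hq r hr heq
      obtain ⟨u, hu⟩ := hl q hq
      obtain ⟨u', hu'⟩ := hl r hr
      simp only [hu, hu', Sum.elim_inl, id, Prod.mk.injEq] at heq
      exact Prod.ext (by rw [hu, hu', heq.1]) heq.2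
    have hmatch : IsBipMatching E (M₁.image (fun q => (Sum.elim id id q.1, q.2))) := by
      constructor
      · intro p hp
        obtain ⟨q, hq, rfl⟩ := Finset.mem_image.mp hp
        obtain ⟨u, hu⟩ := hl q hq
        have he := hedge q (Finset.mem_filter.mp hq).1
        rw [hu] at he
        have he' : E u q.2 := he
        simpa [hu] using he'
      · intro p hp q hq hne
        obtain ⟨p', hp', rfl⟩ := Finset.mem_image.mp hp
        obtain ⟨q', hq', rfl⟩ := Finset.mem_image.mp hq
        have hne' : p' ≠ q' := fun h => hne (by rw [h])
        have hd := hdis p' (Finset.mem_filter.mp hp').1 q' (Finset.mem_filter.mp hq').1 hne'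
        obtain ⟨u, hu⟩ := hl p' hp'
        obtain ⟨u', hu'⟩ := hl q' hq'
        refine ⟨?_, hd.2⟩
        simp only [hu, hu', Sum.elim_inl, id]
        intro h
        exact hd.1 (by rw [hu, hu', h])
    have hc : (M₁.image (fun q => (Sum.elim id id q.1, q.2))).card = M₁.card :=
      Finset.card_image_of_injOn hinj
    rw [← hc]
    exact hν ⟨_, hmatch, rfl⟩
  omega

lemma upper_bound {V : Type*} [Fintype V] [DecidableEq V] {E : V → V → Prop} {ν : ℕ}
    (hν : ∃ M : Finset (V × V), IsBipMatching E M ∧ M.card = ν) :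
    ∃ W : Finset V, Drives E W ∧
      W.card ≤ (Fintype.card V - ν) + {S : Set V | IsChildSCC E S}.ncard := by
  classical
  cases isEmpty_or_nonempty V with
  | inl h =>
    refine ⟨∅, ⟨fun v => isEmptyElim v, ∅, ?_, ?_, ?_⟩, by simp⟩
    · intro q hq; simp at hq
    · intro q hq; simp at hq
    · intro v; exact isEmptyElim v
  | inr hne =>
    obtain ⟨v₀⟩ := hne
    obtain ⟨M, ⟨hedge, hdis⟩, hcard⟩ := hν
    set matched : Finset V := M.image Prod.snd with hmt
    have hsndinj : Set.InjOn Prod.snd (M : Set (V × V)) := by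
      intro p hp q hq h
      by_contra hne'
      exact (hdis p hp q hq hne').2 h
    have hmcard : matched.card = ν := by
      rw [hmt, Finset.card_image_of_injOn hsndinj, hcard]
    set U : Finset V := Finset.univ \ matched with hU
    have hUcard : U.card = Fintype.card V - ν := by
      rw [hU, Finset.card_sdiff_of_subset (Finset.subset_univ _), Finset.card_univ, hmcard]
    -- representatives of child SCCs
    have hfinC : ({S : Set V | IsChildSCC E S}).Finite := Set.toFinite _
    set rep : Set V → V := fun S => if h : ∃ v, S = sccOf E v then h.choose else v₀ with hrep
    set R : Finset V := hfinC.toFinset.image rep with hR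
    set W : Finset V := U ∪ R with hW
    have hRcard : R.card ≤ {S : Set V | IsChildSCC E S}.ncard := by
      rw [hR, Set.ncard_eq_toFinset_card _ hfinC]
      exact Finset.card_image_le
    refine ⟨W, ⟨?_, ?_⟩, ?_⟩
    · -- reachability
      intro v
      obtain ⟨u, huv, hchild⟩ := exists_child (E := E) v
      have hmem : sccOf E u ∈ hfinC.toFinset := hfinC.mem_toFinset.mpr hchild
      refine ⟨rep (sccOf E u), ?_, ?_⟩
      · rw [hW]
        exact Finset.mem_union_right _ (Finset.mem_image_of_mem rep hmem)
      · have hex : ∃ v', sccOf E u = sccOf E v' := ⟨u, rfl⟩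
        have hrepeq : rep (sccOf E u) = hex.choose := by rw [hrep]; exact dif_pos hex
        have hm := mem_sccOf_self E hex.choose
        rw [← hex.choose_spec] at hm
        rw [hrepeq]
        exact hm.1.trans huv
    · -- augmented matching
      refine ⟨M.image (fun p => (Sum.inl p.1, p.2)) ∪ U.image (fun u => (Sum.inr u, u)),
        ?_, ?_, ?_⟩
      · intro q hq
        rcases Finset.mem_union.mp hq with h | h
        · obtain ⟨p, hp, rfl⟩ := Finset.mem_image.mp h
          exact hedge p hp
        · obtain ⟨u, hu, rfl⟩ := Finset.mem_image.mp h
          exact ⟨Finset.mem_union_left _ hu, rfl⟩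
      · intro q hq r hr hne'
        rcases Finset.mem_union.mp hq with h | h <;>
          rcases Finset.mem_union.mp hr with h' | h'
        · obtain ⟨p, hp, rfl⟩ := Finset.mem_image.mp h
          obtain ⟨p', hp', rfl⟩ := Finset.mem_image.mp h'
          have hpp : p ≠ p' := fun he => hne' (by rw [he])
          have hd := hdis p hp p' hp' hpp
          exact ⟨fun he => hd.1 (Sum.inl_injective he), hd.2⟩
        · obtain ⟨p, hp, rfl⟩ := Finset.mem_image.mp h
          obtain ⟨u, hu, rfl⟩ := Finset.mem_image.mp h'
          refine ⟨by simp, ?_⟩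
          intro he
          have : p.2 ∈ matched := Finset.mem_image_of_mem _ hp
          rw [he] at this
          rw [hU] at hu
          exact (Finset.mem_sdiff.mp hu).2 this
        · obtain ⟨u, hu, rfl⟩ := Finset.mem_image.mp h
          obtain ⟨p, hp, rfl⟩ := Finset.mem_image.mp h'
          refine ⟨by simp, ?_⟩
          intro he
          have : p.2 ∈ matched := Finset.mem_image_of_mem _ hp
          rw [← he] at this
          rw [hU] at hu
          exact (Finset.mem_sdiff.mp hu).2 this
        · obtain ⟨u, hu, rfl⟩ := Finset.mem_image.mp h
          obtain ⟨u', hu', rfl⟩ := Finset.mem_image.mp h'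
          have : u ≠ u' := fun he => hne' (by rw [he])
          exact ⟨fun he => this (Sum.inr_injective he), this⟩
      · intro v
        by_cases hv : v ∈ matched
        · obtain ⟨p, hp, hpv⟩ := Finset.mem_image.mp hv
          exact ⟨Sum.inl p.1, Finset.mem_union_left _
            (Finset.mem_image.mpr ⟨p, hp, by rw [hpv]⟩)⟩
        · have hvU : v ∈ U := by rw [hU]; exact Finset.mem_sdiff.mpr ⟨Finset.mem_univ v, hv⟩
          exact ⟨Sum.inr v, Finset.mem_union_right _ (Finset.mem_image_of_mem _ hvU)⟩
    · calc W.card ≤ U.card + R.card := Finset.card_union_le _ _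
        _ ≤ (Fintype.card V - ν) + {S : Set V | IsChildSCC E S}.ncard := by
            rw [hUcard]; exact Nat.add_le_add_left hRcard _

/-- Bounds on the minimum number of driver nodes: with dilation-deficiency
`k = |V| − ν` and `p` child SCCs, `max k p ≤ N_min ≤ k + p`; moreover if
`k = 0` and `p ≥ 1` then `N_min = p`, and if `p = 0` the graph is empty. -/
theorem min_driver_bounds {V : Type*} [Fintype V] [DecidableEq V]
    (E : V → V → Prop) (ν N : ℕ)
    (hν : IsGreatest {m : ℕ | ∃ M : Finset (V × V), IsBipMatching E M ∧ M.card = m} ν)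
    (hN : IsLeast {n : ℕ | ∃ W : Finset V, Drives E W ∧ W.card = n} N) :
    max (Fintype.card V - ν) {S : Set V | IsChildSCC E S}.ncard ≤ N ∧
    N ≤ (Fintype.card V - ν) + {S : Set V | IsChildSCC E S}.ncard ∧
    (Fintype.card V - ν = 0 → 1 ≤ {S : Set V | IsChildSCC E S}.ncard →
      N = {S : Set V | IsChildSCC E S}.ncard) ∧
    ({S : Set V | IsChildSCC E S}.ncard = 0 → Fintype.card V = 0) := by
  classical
  obtain ⟨⟨W₀, hW₀, hW₀card⟩, hNlb⟩ := hN
  have hk : Fintype.card V - ν ≤ N := hW₀card ▸ lower_k hν.2 hW₀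
  have hp : {S : Set V | IsChildSCC E S}.ncard ≤ N := hW₀card ▸ lower_p hW₀
  obtain ⟨W₁, hW₁, hW₁card⟩ := upper_bound hν.1
  have hub : N ≤ (Fintype.card V - ν) + {S : Set V | IsChildSCC E S}.ncard :=
    le_trans (hNlb ⟨W₁, hW₁, rfl⟩) hW₁card
  refine ⟨max_le hk hp, hub, fun h0 _ => by omega, ?_⟩
  intro hp0
  by_contra hV
  obtain ⟨v⟩ : Nonempty V := Fintype.card_pos_iff.mp (Nat.pos_of_ne_zero hV)
  obtain ⟨u, -, hchild⟩ := exists_child (E := E) v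
  have hne : {S : Set V | IsChildSCC E S}.Nonempty := ⟨_, hchild⟩
  have := (Set.ncard_pos (Set.toFinite _)).mpr hne
  omega
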